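/- If m = p₁^{e₁} ⋯ p_k^{e_k} where each p_i is a distinct prime with p_i ≡ ±1 (mod 10), then there are exactly 2^k power Fibonacci sequences modulo m. -/

import Mathlib

section Helpers
variable {p k : ℕ}

lemma zmod_isUnit_iff (hp : p.Prime) (hk : 1 ≤ k) (a : ZMod (p^k)) :
    IsUnit a ↔ ¬ p ∣ a.val := by
  haveI : NeZero (p^k) := ⟨pow_ne_zero _ hp.ne_zero⟩
  conv_lhs => rw [← ZMod.natCast_zmod_val a]
  rw [ZMod.isUnit_iff_coprime, Nat.coprime_pow_right_iff hk, Nat.coprime_comm,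
    hp.coprime_iff_not_dvd]

lemma zmod_p_not_unit (hp : p.Prime) (hk : 1 ≤ k) :
    ¬ IsUnit ((p : ℕ) : ZMod (p^k)) := by
  rw [ZMod.isUnit_iff_coprime, Nat.coprime_pow_right_iff hk]
  simp [Nat.Coprime, Nat.gcd_self, hp.ne_one]

lemma zmod_unit_or (hp : p.Prime) (hk : 1 ≤ k) (a : ZMod (p^k)) :
    IsUnit a ∨ ∃ c : ZMod (p^k), a = (p : ZMod (p^k)) * c := by
  haveI : NeZero (p^k) := ⟨pow_ne_zero _ hp.ne_zero⟩
  by_cases h : p ∣ a.val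
  · obtain ⟨t, ht⟩ := h
    exact Or.inr ⟨(t : ZMod (p^k)), by rw [← Nat.cast_mul, ← ht, ZMod.natCast_zmod_val]⟩
  · exact Or.inl ((zmod_isUnit_iff hp hk a).mpr h)

lemma zmod_mul_eq_zero_cases (hp : p.Prime) (hk : 1 ≤ k) {a b : ZMod (p^k)}
    (h : a * b = 0) (hu : IsUnit (b - a)) : a = 0 ∨ b = 0 := by
  rcases zmod_unit_or hp hk a with ha | ⟨c, hc⟩
  · obtain ⟨v, hv⟩ := ha.exists_left_inv
    right
    calc b = v * a * b := by rw [hv, one_mul]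
    _ = 0 := by rw [mul_assoc, h, mul_zero]
  · rcases zmod_unit_or hp hk b with hb | ⟨d, hd⟩
    · obtain ⟨v, hv⟩ := hb.exists_left_inv
      left
      calc a = a * b * v := by rw [mul_assoc, mul_comm b v, hv, mul_one]
      _ = 0 := by rw [h, zero_mul]
    · exfalso
      apply zmod_p_not_unit hp hk
      have : b - a = (p : ZMod (p^k)) * (d - c) := by rw [hc, hd]; ring
      rw [this] at hu
      exact isUnit_of_mul_isUnit_left hu



lemma zmod_cast_val (hp : p.Prime) (a : ZMod (p^(k+1))) :
    (ZMod.castHom (pow_dvd_pow p (Nat.le_succ k)) (ZMod (p^k)) a) = ((a.val : ℕ) : ZMod (p^k)) := by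
  haveI : NeZero (p^(k+1)) := ⟨pow_ne_zero _ hp.ne_zero⟩
  rw [ZMod.castHom_apply, ← ZMod.natCast_val]

lemma zmod_ker_mul_eq_zero (hp : p.Prime) (hk : 1 ≤ k) (a b : ZMod (p^(k+1)))
    (ha : (ZMod.castHom (pow_dvd_pow p (Nat.le_succ k)) (ZMod (p^k)) a) = 0)
    (hb : (ZMod.castHom (pow_dvd_pow p (Nat.le_succ k)) (ZMod (p^k)) b) = 0) :
    a * b = 0 := by
  haveI : NeZero (p^(k+1)) := ⟨pow_ne_zero _ hp.ne_zero⟩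
  rw [zmod_cast_val hp, ZMod.natCast_eq_zero_iff] at ha hb
  have hdvd : (p^(k+1) : ℕ) ∣ a.val * b.val := by
    refine dvd_trans ?_ (mul_dvd_mul ha hb)
    rw [← pow_add]
    exact pow_dvd_pow p (by omega)
  calc a * b = ((a.val * b.val : ℕ) : ZMod (p^(k+1))) := by
        push_cast [ZMod.natCast_zmod_val]; ring
  _ = 0 := (ZMod.natCast_eq_zero_iff _ _).mpr hdvd

lemma zmod_unit_of_cast_unit (hp : p.Prime) (hk : 1 ≤ k) (a : ZMod (p^(k+1)))
    (h : IsUnit (ZMod.castHom (pow_dvd_pow p (Nat.le_succ k)) (ZMod (p^k)) a)) :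
    IsUnit a := by
  rw [zmod_cast_val hp, ZMod.isUnit_iff_coprime, Nat.coprime_pow_right_iff hk] at h
  haveI : NeZero (p^(k+1)) := ⟨pow_ne_zero _ hp.ne_zero⟩
  rw [← ZMod.natCast_zmod_val a, ZMod.isUnit_iff_coprime,
    Nat.coprime_pow_right_iff (by omega : 0 < k+1)]
  exact h



lemma five_unit (hp : p.Prime) (hp5 : p ≠ 5) {k : ℕ} (hk : 1 ≤ k) :
    IsUnit (5 : ZMod (p^k)) := by
  have h : ((5 : ℕ) : ZMod (p^k)) = (5 : ZMod (p^k)) := by norm_num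
  rw [← h, ZMod.isUnit_iff_coprime, Nat.coprime_pow_right_iff hk]
  exact (Nat.coprime_primes (by norm_num) hp).mpr (Ne.symm hp5)

lemma two_unit (hp : p.Prime) (hp2 : p ≠ 2) {k : ℕ} (hk : 1 ≤ k) :
    IsUnit (2 : ZMod (p^k)) := by
  have h : ((2 : ℕ) : ZMod (p^k)) = (2 : ZMod (p^k)) := by norm_num
  rw [← h, ZMod.isUnit_iff_coprime, Nat.coprime_pow_right_iff hk]
  exact (Nat.coprime_primes (by norm_num) hp).mpr (Ne.symm hp2)

lemma exists_root (hp : p.Prime) (hp2 : p ≠ 2) (hp5 : p ≠ 5)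
    (hsq : IsSquare (5 : ZMod p)) :
    ∀ k, 1 ≤ k → ∃ x : ZMod (p^k), x^2 = x + 1 := by
  refine Nat.le_induction ?_ ?_
  · -- base case k = 1
    show ∃ x : ZMod (p^1), x^2 = x + 1
    rw [pow_one]
    obtain ⟨y, hy⟩ := hsq
    haveI : Fact p.Prime := ⟨hp⟩
    have h2 : (2 : ZMod p) ≠ 0 := by
      intro h
      have : ((2:ℕ) : ZMod p) = 0 := by push_cast; exact h
      rw [ZMod.natCast_eq_zero_iff] at this
      exact hp2 ((Nat.prime_dvd_prime_iff_eq hp (by norm_num)).mp this)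
    obtain ⟨v, hv⟩ := (IsUnit.mk0 _ h2).exists_left_inv
    exact ⟨v * (1 + y), by linear_combination (3*v + v*y + 1) * hv + (-(v^2)) * hy⟩
  · -- inductive step
    rintro n hn ⟨x0, h0⟩
    haveI : NeZero (p^n) := ⟨pow_ne_zero _ hp.ne_zero⟩
    set C := ZMod.castHom (pow_dvd_pow p (Nat.le_succ n)) (ZMod (p^n)) with hC
    set x1 : ZMod (p^(n+1)) := ((x0.val : ℕ) : ZMod (p^(n+1))) with hx1
    have hcast : C x1 = x0 := by
      rw [hx1, map_natCast, ZMod.natCast_zmod_val]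
    have hu : IsUnit (2 * x1 - 1) := by
      apply zmod_unit_of_cast_unit hp hn
      have hc2 : C (2 * x1 - 1) = 2 * x0 - 1 := by
        rw [map_sub, map_mul, map_ofNat, map_one, hcast]
      rw [hc2]
      have hsq5 : (2 * x0 - 1) * (2 * x0 - 1) = 5 := by linear_combination 4 * h0
      have h5 : IsUnit (5 : ZMod (p^n)) := five_unit hp hp5 hn
      rw [← hsq5] at h5
      exact isUnit_of_mul_isUnit_left h5
    obtain ⟨v, hv⟩ := hu.exists_left_inv
    have hr : C (x1^2 - x1 - 1) = 0 := by
      rw [map_sub, map_sub, map_pow, map_one, hcast, h0]; ring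
    have hrr : (x1^2 - x1 - 1) * (x1^2 - x1 - 1) = 0 :=
      zmod_ker_mul_eq_zero hp hn _ _ hr hr
    exact ⟨x1 - (x1^2 - x1 - 1) * v,
      by linear_combination (-(x1^2 - x1 - 1)) * hv + v^2 * hrr⟩
end Helpers

lemma sq5 {p : ℕ} (hp : p.Prime) (h10 : p % 10 = 1 ∨ p % 10 = 9) :
    IsSquare (5 : ZMod p) := by
  haveI : Fact p.Prime := ⟨hp⟩
  haveI : Fact (Nat.Prime 5) := ⟨by norm_num⟩
  have hp2 : p ≠ 2 := by rintro rfl; omega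
  have h : IsSquare ((p : ℕ) : ZMod 5) := by
    have h5 : p % 5 = 1 ∨ p % 5 = 4 := by
      have := Nat.mod_mod_of_dvd p (by norm_num : 5 ∣ 10)
      omega
    rw [← ZMod.natCast_mod p 5]
    rcases h5 with h | h <;> rw [h]
    · exact ⟨1, by norm_num⟩
    · exact ⟨2, by norm_num [show ((4:ℕ) : ZMod 5) = 2 * 2 from rfl]⟩
  have := (ZMod.exists_sq_eq_prime_iff_of_mod_four_eq_one (p := 5) (q := p)
    (by norm_num) hp2).mp h
  simpa using this

lemma cnt (p k : ℕ) (hp : p.Prime) (h10 : p % 10 = 1 ∨ p % 10 = 9) (hk : 1 ≤ k) :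
    Nat.card {x : ZMod (p^k) // x^2 = x + 1} = 2 := by
  have hmm := Nat.mod_mod_of_dvd p (by norm_num : 2 ∣ 10)
  have hp2 : p ≠ 2 := by rintro rfl; omega
  have hp5 : p ≠ 5 := by rintro rfl; omega
  obtain ⟨x0, h0⟩ := exists_root hp hp2 hp5 (sq5 hp h10) k hk
  haveI : Fact (1 < p^k) := ⟨Nat.one_lt_pow (by omega) hp.one_lt⟩
  have hfive : (2*x0 - 1) * (2*x0 - 1) = 5 := by linear_combination 4*h0
  have hu : IsUnit (2*x0 - 1) := by
    have h5 := five_unit hp hp5 hk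
    rw [← hfive] at h5
    exact isUnit_of_mul_isUnit_left h5
  have hset : {x : ZMod (p^k) | x^2 = x + 1} = {x0, 1 - x0} := by
    ext x
    simp only [Set.mem_setOf_eq, Set.mem_insert_iff, Set.mem_singleton_iff]
    constructor
    · intro hx
      have hab : (x - x0) * (x + x0 - 1) = 0 := by linear_combination hx - h0
      have hu2 : IsUnit ((x + x0 - 1) - (x - x0)) := by
        have he : (x + x0 - 1) - (x - x0) = 2*x0 - 1 := by ring
        rw [he]; exact hu
      rcases zmod_mul_eq_zero_cases hp hk hab hu2 with h | h
      · left; linear_combination h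
      · right; linear_combination h
    · rintro (rfl | rfl)
      · exact h0
      · linear_combination h0
  have hne : x0 ≠ 1 - x0 := by
    intro h
    have hz : 2*x0 - 1 = 0 := by linear_combination h
    rw [hz, zero_mul] at hfive
    exact (five_unit hp hp5 hk).ne_zero hfive.symm
  have h1 : Nat.card {x : ZMod (p^k) // x^2 = x + 1}
      = Set.ncard {x : ZMod (p^k) | x^2 = x + 1} := Nat.card_coe_set_eq _
  rw [h1, hset, Set.ncard_pair hne]

theorem count_power_fib_composite (S : Finset ℕ) (e : ℕ → ℕ) (m : ℕ)
    (hS : ∀ p ∈ S, p.Prime ∧ (p % 10 = 1 ∨ p % 10 = 9) ∧ 1 ≤ e p)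
    (hm : m = ∏ p ∈ S, p ^ e p) :
    Set.ncard {x : ZMod m | x ^ 2 = x + 1} = 2 ^ S.card := by
  classical
  have hprod : m = ∏ i : {p // p ∈ S}, (i : ℕ) ^ e i := by
    rw [hm]
    exact (Finset.prod_coe_sort S (fun p => p ^ e p)).symm
  subst hprod
  set a : {p // p ∈ S} → ℕ := fun i => (i : ℕ) ^ e i with ha
  have hco : Pairwise (Function.onFun Nat.Coprime a) := by
    intro i j hij
    have hi := hS i i.2
    have hj := hS j j.2
    exact Nat.Coprime.pow _ _
      ((Nat.coprime_primes hi.1 hj.1).mpr (fun h => hij (Subtype.ext h)))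
  let E := ZMod.prodEquivPi a hco
  have step1 : Set.ncard {x : ZMod (∏ i, a i) | x ^ 2 = x + 1}
      = Nat.card {x : ZMod (∏ i, a i) // x ^ 2 = x + 1} :=
    (Nat.card_coe_set_eq _).symm
  have step2 : Nat.card {x : ZMod (∏ i, a i) // x ^ 2 = x + 1}
      = Nat.card {y : Π i, ZMod (a i) // y ^ 2 = y + 1} := by
    refine Nat.card_congr (E.toEquiv.subtypeEquiv fun x => ?_)
    constructor
    · intro h
      show (E x) ^ 2 = E x + 1
      rw [← map_pow, h, map_add, map_one]
    · intro h
      apply E.injective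
      rw [map_pow, map_add, map_one]
      exact h
  have step3 : Nat.card {y : Π i, ZMod (a i) // y ^ 2 = y + 1}
      = Nat.card {y : Π i, ZMod (a i) // ∀ i, (y i) ^ 2 = y i + 1} := by
    refine Nat.card_congr (Equiv.subtypeEquivRight fun y => ?_)
    constructor
    · intro h i
      have := congrFun h i
      simpa using this
    · intro h
      funext i
      simpa using h i
  have step4 : Nat.card {y : Π i, ZMod (a i) // ∀ i, (y i) ^ 2 = y i + 1}
      = Nat.card (Π i, {z : ZMod (a i) // z ^ 2 = z + 1}) :=
    Nat.card_congr (Equiv.subtypePiEquivPi (p := fun i (z : ZMod (a i)) => z ^ 2 = z + 1))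
  rw [step1, step2, step3, step4, Nat.card_pi]
  have hcnt : ∀ i : {p // p ∈ S}, Nat.card {z : ZMod (a i) // z ^ 2 = z + 1} = 2 := by
    intro i
    obtain ⟨h1, h2, h3⟩ := hS i i.2
    exact cnt _ _ h1 h2 h3
  rw [Finset.prod_congr rfl (fun i _ => hcnt i), Finset.prod_const]
  simp [Finset.card_univ]
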